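/- The constraint set P = {x ∈ {0,1}^N : x[t] ≥ x[t−1] − x[t−2] and x[t] ≥ x[t−1] − x[t−3] for all 1 ≤ t ≤ N+2, with x[t] := 0 for t < 1 and t > N} equals the set of binary sequences in which every maximal run of consecutive ones has length at least 3. -/
import Mathlib

/-- The constraint set
`P = {x : x[t] ≥ x[t−1] − x[t−2] and x[t] ≥ x[t−1] − x[t−3], 1 ≤ t ≤ N+2}`
(for a binary sequence extended by zeros outside `{1, …, N}`) equals the set
of binary sequences in which every maximal run of consecutive ones has length
at least 3. -/
theorem constraint_iff_runs_ge_three (N : ℕ) (x : ℤ → ℤ)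
    (hbin : ∀ t, x t = 0 ∨ x t = 1)
    (hzero : ∀ t : ℤ, (t < 1 ∨ (N : ℤ) < t) → x t = 0) :
    (∀ t : ℤ, 1 ≤ t → t ≤ (N : ℤ) + 2 →
        x (t - 1) - x (t - 2) ≤ x t ∧ x (t - 1) - x (t - 3) ≤ x t) ↔
    (∀ a b : ℤ, 1 ≤ a → b ≤ (N : ℤ) → a ≤ b →
        (∀ t, a ≤ t → t ≤ b → x t = 1) →
        x (a - 1) = 0 → x (b + 1) = 0 →
        3 ≤ b - a + 1) := by
  have hnn : ∀ s, 0 ≤ x s ∧ x s ≤ 1 := fun s => by rcases hbin s with h | h <;> omega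
  constructor
  · intro h a b ha hb hab hrun ha0 hb0
    by_contra hlt
    have hcase : b = a ∨ b = a + 1 := by omega
    rcases hcase with rfl | rfl
    · have h1 := (h (b + 1) (by omega) (by omega)).1
      have e1 : b + 1 - 1 = b := by ring
      have e2 : b + 1 - 2 = b - 1 := by ring
      rw [e1, e2] at h1
      have hxb : x b = 1 := hrun b le_rfl le_rfl
      omega
    · have h1 := (h (a + 1 + 1) (by omega) (by omega)).2
      have e1 : a + 1 + 1 - 1 = a + 1 := by ring
      have e2 : a + 1 + 1 - 3 = a - 1 := by ring
      rw [e1, e2] at h1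
      have hxb : x (a + 1) = 1 := hrun (a + 1) (by omega) le_rfl
      omega
  · intro h t ht1 ht2
    rcases hbin t with h0 | h1
    · rcases hbin (t - 1) with ha | ha
      · have := (hnn (t - 2)).1
        have := (hnn (t - 3)).1
        omega
      · have hb1 : 1 ≤ t - 1 := by
          by_contra hc
          have := hzero (t - 1) (Or.inl (by omega)); omega
        have hb2 : t - 1 ≤ (N : ℤ) := by
          by_contra hc
          have := hzero (t - 1) (Or.inr (by omega)); omega
        have h2 : x (t - 2) = 1 := by
          rcases hbin (t - 2) with hc | hc
          · exfalso
            have hh := h (t - 1) (t - 1) hb1 hb2 le_rfl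
              (fun s hs1 hs2 => le_antisymm hs1 hs2 ▸ ha)
            have e1 : t - 1 - 1 = t - 2 := by ring
            have e2 : t - 1 + 1 = t := by ring
            rw [e1, e2] at hh
            have := hh hc h0
            omega
          · exact hc
        have h3 : x (t - 3) = 1 := by
          rcases hbin (t - 3) with hc | hc
          · exfalso
            have hb3 : 1 ≤ t - 2 := by
              by_contra hcc
              have := hzero (t - 2) (Or.inl (by omega)); omega
            have hh := h (t - 2) (t - 1) hb3 hb2 (by omega)
              (fun s hs1 hs2 => by
                have hs : s = t - 2 ∨ s = t - 1 := by omega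
                rcases hs with rfl | rfl
                · exact h2
                · exact ha)
            have e1 : t - 2 - 1 = t - 3 := by ring
            have e2 : t - 1 + 1 = t := by ring
            rw [e1, e2] at hh
            have := hh hc h0
            omega
          · exact hc
        omega
    · have := (hnn (t - 1)).2
      have := (hnn (t - 2)).1
      have := (hnn (t - 3)).1
      omega
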